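/- arXiv:2306.11117 — 2 statements merged into one kernel-verified Lean document; each statement's English description precedes it below -/
import Mathlib

section
/- For κ > 0 and α > 0 with α ≠ 1, define H(κ,α) = ((e^{κα}−1)·κ^{α−1} / (α·(e^{κ}−1)^α))^{1/(1−α)}. Then H(κ,α) → 1 as κ → 0⁺ and H(κ,α) → 0 as κ → ∞. -/
open Real Filter Topology

-- slope limit: (exp x - 1)/x → 1 as x → 0 (punctured)
lemma lem_slope : Tendsto (fun x : ℝ => (Real.exp x - 1) / x) (nhdsWithin 0 {x | x ≠ 0}) (nhds 1) := by
  have h := Real.hasDerivAt_exp 0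
  rw [hasDerivAt_iff_tendsto_slope] at h
  rw [Real.exp_zero] at h
  exact h.congr fun x => by rw [slope_def_field]; simp

-- log(exp(c κ) - 1) - log(c κ) → 0 as κ → 0⁺, for c > 0
lemma lem_zero (c : ℝ) (hc : 0 < c) :
    Tendsto (fun κ : ℝ => Real.log (Real.exp (c * κ) - 1) - Real.log (c * κ))
      (nhdsWithin 0 (Set.Ioi 0)) (nhds 0) := by
  have hmap : Tendsto (fun κ : ℝ => c * κ) (nhdsWithin 0 (Set.Ioi 0)) (nhdsWithin 0 {x | x ≠ 0}) := by
    apply tendsto_nhdsWithin_of_tendsto_nhds_of_eventually_within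
    · simpa using (show Continuous (fun κ : ℝ => c * κ) from continuous_const.mul continuous_id).tendsto' 0 0 (by simp) |>.mono_left nhdsWithin_le_nhds
    · filter_upwards [self_mem_nhdsWithin] with κ hκ
      exact (mul_pos hc hκ).ne'
  have h1 : Tendsto (fun κ : ℝ => (Real.exp (c * κ) - 1) / (c * κ))
      (nhdsWithin 0 (Set.Ioi 0)) (nhds 1) := lem_slope.comp hmap
  have h2 := (Real.continuousAt_log (by norm_num : (1:ℝ) ≠ 0)).tendsto.comp h1
  rw [Real.log_one] at h2
  refine h2.congr' ?_
  filter_upwards [self_mem_nhdsWithin] with κ (hκ : 0 < κ)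
  have hcκ : 0 < c * κ := mul_pos hc hκ
  have he : 0 < Real.exp (c * κ) - 1 := by
    have : (1:ℝ) < Real.exp (c * κ) := Real.one_lt_exp_iff.2 hcκ
    linarith
  simp [Function.comp, Real.log_div he.ne' hcκ.ne']

-- log(exp x - 1) - x → 0 as x → ∞
lemma lem_inf : Tendsto (fun x : ℝ => Real.log (Real.exp x - 1) - x) atTop (nhds 0) := by
  have h1 : Tendsto (fun x : ℝ => 1 - Real.exp (-x)) atTop (nhds 1) := by
    have := Real.tendsto_exp_atBot.comp tendsto_neg_atTop_atBot
    simpa using (tendsto_const_nhds (x := (1:ℝ))).sub this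
  have h2 := (Real.continuousAt_log (by norm_num : (1:ℝ) ≠ 0)).tendsto.comp h1
  rw [Real.log_one] at h2
  refine h2.congr' ?_
  filter_upwards [eventually_gt_atTop 0] with x hx
  have he : 0 < Real.exp x - 1 := by
    have : (1:ℝ) < Real.exp x := Real.one_lt_exp_iff.2 hx
    linarith
  have : (1 : ℝ) - Real.exp (-x) = (Real.exp x - 1) / Real.exp x := by
    rw [Real.exp_neg]; field_simp
  rw [Function.comp_apply, this, Real.log_div he.ne' (Real.exp_pos x).ne', Real.log_exp]

theorem stmt_8 (α : ℝ) (hα : 0 < α) (hα1 : α ≠ 1) :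
    Filter.Tendsto
      (fun κ : ℝ => ((Real.exp (κ * α) - 1) * κ ^ (α - 1) /
          (α * (Real.exp κ - 1) ^ α)) ^ (1 / (1 - α)))
      (nhdsWithin 0 (Set.Ioi 0)) (nhds 1) ∧
    Filter.Tendsto
      (fun κ : ℝ => ((Real.exp (κ * α) - 1) * κ ^ (α - 1) /
          (α * (Real.exp κ - 1) ^ α)) ^ (1 / (1 - α)))
      Filter.atTop (nhds 0) := by
  have h1α : 1 - α ≠ 0 := sub_ne_zero.2 (Ne.symm hα1)
  -- basic positivity and log formula for κ > 0
  have key : ∀ κ : ℝ, 0 < κ →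
      ((Real.exp (κ * α) - 1) * κ ^ (α - 1) / (α * (Real.exp κ - 1) ^ α)) ^ (1 / (1 - α))
        = Real.exp ((Real.log (Real.exp (κ * α) - 1) + (α - 1) * Real.log κ - Real.log α
            - α * Real.log (Real.exp κ - 1)) * (1 / (1 - α))) := by
    intro κ hκ
    have hκα : 0 < κ * α := mul_pos hκ hα
    have hA : 0 < Real.exp (κ * α) - 1 := by
      have : (1:ℝ) < Real.exp (κ * α) := Real.one_lt_exp_iff.2 hκα
      linarith
    have hB : 0 < Real.exp κ - 1 := by
      have : (1:ℝ) < Real.exp κ := Real.one_lt_exp_iff.2 hκ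
      linarith
    have hP : 0 < κ ^ (α - 1) := Real.rpow_pos_of_pos hκ _
    have hQ : 0 < (Real.exp κ - 1) ^ α := Real.rpow_pos_of_pos hB _
    have hg : 0 < (Real.exp (κ * α) - 1) * κ ^ (α - 1) / (α * (Real.exp κ - 1) ^ α) := by
      positivity
    rw [Real.rpow_def_of_pos hg]
    congr 1
    rw [Real.log_div (by positivity) (by positivity), Real.log_mul hA.ne' hP.ne',
      Real.log_mul hα.ne' hQ.ne', Real.log_rpow hκ, Real.log_rpow hB]
    ring
  constructor
  · -- κ → 0⁺
    have hL1 := lem_zero α hα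
    have hL2 := lem_zero 1 one_pos
    have hlog : Tendsto (fun κ : ℝ => (Real.log (Real.exp (κ * α) - 1) + (α - 1) * Real.log κ
        - Real.log α - α * Real.log (Real.exp κ - 1)) * (1 / (1 - α)))
        (nhdsWithin 0 (Set.Ioi 0)) (nhds 0) := by
      have h := (hL1.sub (hL2.const_mul α)).mul_const (1 / (1 - α))
      simp only [sub_zero, zero_sub, mul_zero, zero_mul] at h
      refine h.congr' ?_
      filter_upwards [self_mem_nhdsWithin] with κ (hκ : 0 < κ)
      have : Real.log (α * κ) = Real.log α + Real.log κ := Real.log_mul hα.ne' hκ.ne'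
      rw [mul_comm α κ] at this ⊢
      simp only [one_mul]
      rw [this]
      ring
    have := (Real.continuous_exp.tendsto 0).comp hlog
    rw [Real.exp_zero] at this
    refine this.congr' ?_
    filter_upwards [self_mem_nhdsWithin] with κ (hκ : 0 < κ)
    exact (key κ hκ).symm
  · -- κ → ∞
    have hmap : Tendsto (fun κ : ℝ => κ * α) atTop atTop :=
      tendsto_id.atTop_mul_const hα
    have hM1 := lem_inf.comp hmap
    have hM2 := lem_inf
    have hconst : Tendsto (fun κ : ℝ =>
        ((Real.log (Real.exp (κ * α) - 1) - κ * α)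
          - α * (Real.log (Real.exp κ - 1) - κ) - Real.log α) * (1 / (1 - α)))
        atTop (nhds ((0 - α * 0 - Real.log α) * (1 / (1 - α)))) := by
      exact ((hM1.sub (hM2.const_mul α)).sub_const (Real.log α)).mul_const _
    have hneg : Tendsto (fun κ : ℝ => -Real.log κ) atTop atBot :=
      tendsto_neg_atTop_atBot.comp Real.tendsto_log_atTop
    have hlog : Tendsto (fun κ : ℝ => (Real.log (Real.exp (κ * α) - 1) + (α - 1) * Real.log κ
        - Real.log α - α * Real.log (Real.exp κ - 1)) * (1 / (1 - α))) atTop atBot := by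
      refine (hconst.add_atBot hneg).congr' ?_
      filter_upwards [eventually_gt_atTop 0] with κ (hκ : 0 < κ)
      have hm1 : (α - 1) * Real.log κ * (1 / (1 - α)) = -Real.log κ := by
        field_simp
        ring
      have expand : (Real.log (Real.exp (κ * α) - 1) + (α - 1) * Real.log κ
          - Real.log α - α * Real.log (Real.exp κ - 1))
        = ((Real.log (Real.exp (κ * α) - 1) - κ * α)
          - α * (Real.log (Real.exp κ - 1) - κ) - Real.log α) + (α - 1) * Real.log κ := by
        ring
      rw [expand, add_mul, hm1]
    have := Real.tendsto_exp_atBot.comp hlog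
    refine this.congr' ?_
    filter_upwards [eventually_gt_atTop 0] with κ (hκ : 0 < κ)
    exact (key κ hκ).symm
end

section
/- Define g(κ) = −1 + κ/(e^κ − 1) − log((e^κ − 1)/(κ e^κ)) for κ > 0. Then g(κ) ≥ 0 for all κ > 0, g(κ) → 0 as κ → 0⁺, and g(κ) → ∞ as κ → ∞. -/
open Real Filter Set

noncomputable def gfun (κ : ℝ) : ℝ :=
  -1 + κ / (Real.exp κ - 1) - Real.log ((Real.exp κ - 1) / (κ * Real.exp κ))

lemma s_pos {κ : ℝ} (hκ : 0 < κ) : 0 < Real.exp κ - 1 :=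
  sub_pos.mpr (Real.one_lt_exp_iff.mpr hκ)

lemma key_ineq {κ : ℝ} (hκ : 0 < κ) : κ ^ 2 * Real.exp κ < (Real.exp κ - 1) ^ 2 := by
  have h1 : κ / 2 < Real.sinh (κ / 2) := Real.self_lt_sinh_iff.mpr (by linarith)
  have e1 : Real.exp (κ / 2) * Real.exp (κ / 2) = Real.exp κ := by
    rw [← Real.exp_add]; ring_nf
  have e2 : Real.exp (κ / 2) * Real.exp (-(κ / 2)) = 1 := by
    rw [← Real.exp_add]; simp
  have hs : Real.exp κ - 1 = Real.exp (κ / 2) * (2 * Real.sinh (κ / 2)) := by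
    rw [Real.sinh_eq]; linarith [e1, e2]
  have hep : 0 < Real.exp (κ / 2) := Real.exp_pos _
  have h2 : κ ^ 2 < (2 * Real.sinh (κ / 2)) ^ 2 := by nlinarith
  have e3 : (Real.exp (κ / 2) * (2 * Real.sinh (κ / 2))) ^ 2
      = Real.exp κ * (2 * Real.sinh (κ / 2)) ^ 2 := by
    rw [mul_pow, sq, e1]
  rw [hs, e3]
  nlinarith [Real.exp_pos κ]

lemma hasDerivAt_gfun {κ : ℝ} (hκ : 0 < κ) :
    HasDerivAt gfun
      (((Real.exp κ - 1) ^ 2 - κ ^ 2 * Real.exp κ) / (κ * (Real.exp κ - 1) ^ 2)) κ := by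
  have hs := s_pos hκ
  have hne : Real.exp κ - 1 ≠ 0 := ne_of_gt hs
  have h1 : HasDerivAt (fun x => x / (Real.exp x - 1))
      ((1 * (Real.exp κ - 1) - κ * Real.exp κ) / (Real.exp κ - 1) ^ 2) κ :=
    (hasDerivAt_id κ).div ((Real.hasDerivAt_exp κ).sub_const 1) hne
  have h2 : HasDerivAt (fun x => Real.log (Real.exp x - 1)) (Real.exp κ / (Real.exp κ - 1)) κ :=
    ((Real.hasDerivAt_exp κ).sub_const 1).log hne
  have h3 : HasDerivAt Real.log κ⁻¹ κ := Real.hasDerivAt_log (ne_of_gt hκ)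
  have h4 : HasDerivAt (fun x : ℝ => -1 + x / (Real.exp x - 1) -
      (Real.log (Real.exp x - 1) - (Real.log x + x)))
      ((1 * (Real.exp κ - 1) - κ * Real.exp κ) / (Real.exp κ - 1) ^ 2 -
        (Real.exp κ / (Real.exp κ - 1) - (κ⁻¹ + 1))) κ :=
    (h1.const_add (-1)).sub (h2.sub (h3.add (hasDerivAt_id κ)))
  have heq : (1 * (Real.exp κ - 1) - κ * Real.exp κ) / (Real.exp κ - 1) ^ 2 -
      (Real.exp κ / (Real.exp κ - 1) - (κ⁻¹ + 1)) =
      ((Real.exp κ - 1) ^ 2 - κ ^ 2 * Real.exp κ) / (κ * (Real.exp κ - 1) ^ 2) := by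
    field_simp
    ring
  rw [heq] at h4
  refine h4.congr_of_eventuallyEq ?_
  filter_upwards [Ioi_mem_nhds hκ] with x hx
  have hx : (0:ℝ) < x := hx
  have hsx := s_pos hx
  unfold gfun
  rw [Real.log_div (ne_of_gt hsx) (mul_ne_zero (ne_of_gt hx) (Real.exp_ne_zero x)),
    Real.log_mul (ne_of_gt hx) (Real.exp_ne_zero x), Real.log_exp]

lemma gfun_mono : StrictMonoOn gfun (Set.Ioi 0) := by
  apply strictMonoOn_of_deriv_pos (convex_Ioi 0)
  · intro x hx
    exact ((hasDerivAt_gfun hx).continuousAt).continuousWithinAt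
  · intro x hx
    rw [interior_Ioi] at hx
    rw [(hasDerivAt_gfun hx).deriv]
    have h1 := key_ineq hx
    have h2 := s_pos hx
    exact div_pos (by linarith) (mul_pos hx (pow_pos h2 2))

lemma gfun_tendsto_zero :
    Tendsto gfun (nhdsWithin 0 (Set.Ioi 0)) (nhds 0) := by
  have hslope : Tendsto (fun κ : ℝ => (Real.exp κ - 1) / κ) (nhdsWithin 0 (Set.Ioi 0)) (nhds 1) := by
    have h := (Real.hasDerivAt_exp 0).tendsto_slope_zero_right
    simpa [Real.exp_zero, inv_mul_eq_div] using h
  have hinv : Tendsto (fun κ : ℝ => κ / (Real.exp κ - 1)) (nhdsWithin 0 (Set.Ioi 0)) (nhds 1) := by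
    have := (hslope.inv₀ one_ne_zero)
    simp only [inv_one] at this
    exact this.congr fun x => by rw [inv_div]
  have hexp : Tendsto (fun κ : ℝ => (Real.exp κ)⁻¹) (nhdsWithin 0 (Set.Ioi 0)) (nhds 1) := by
    have : Tendsto Real.exp (nhdsWithin 0 (Set.Ioi 0)) (nhds 1) :=
      (Real.continuous_exp.tendsto' 0 1 (by simp)).mono_left nhdsWithin_le_nhds
    simpa using this.inv₀ one_ne_zero
  have h2 : Tendsto (fun κ : ℝ => (Real.exp κ - 1) / (κ * Real.exp κ))
      (nhdsWithin 0 (Set.Ioi 0)) (nhds 1) := by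
    have := hslope.mul hexp
    simp only [mul_one] at this
    exact this.congr fun x => by rw [← div_eq_mul_inv, div_div]
  have h3 : Tendsto (fun κ : ℝ => Real.log ((Real.exp κ - 1) / (κ * Real.exp κ)))
      (nhdsWithin 0 (Set.Ioi 0)) (nhds 0) := by
    have := (Real.continuousAt_log one_ne_zero).tendsto.comp h2
    simpa [Function.comp_def] using this
  have := (tendsto_const_nhds (x := (-1:ℝ)) (f := nhdsWithin 0 (Set.Ioi 0))).add hinv |>.sub h3
  simp at this; exact this

theorem stmt_9 :
    (∀ κ : ℝ, 0 < κ →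
      0 ≤ -1 + κ / (Real.exp κ - 1) -
        Real.log ((Real.exp κ - 1) / (κ * Real.exp κ))) ∧
    Filter.Tendsto
      (fun κ : ℝ => -1 + κ / (Real.exp κ - 1) -
        Real.log ((Real.exp κ - 1) / (κ * Real.exp κ)))
      (nhdsWithin 0 (Set.Ioi 0)) (nhds 0) ∧
    Filter.Tendsto
      (fun κ : ℝ => -1 + κ / (Real.exp κ - 1) -
        Real.log ((Real.exp κ - 1) / (κ * Real.exp κ)))
      Filter.atTop Filter.atTop := by
  refine ⟨?_, gfun_tendsto_zero, ?_⟩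
  · intro κ hκ
    have : (0:ℝ) ≤ gfun κ := by
      refine le_of_tendsto gfun_tendsto_zero ?_
      filter_upwards [Ioo_mem_nhdsGT_of_mem (left_mem_Ico.mpr hκ)] with x hx
      exact (gfun_mono hx.1 hκ hx.2).le
    exact this
  · apply tendsto_atTop_mono' _ _ (tendsto_atTop_add_const_right _ (-1) Real.tendsto_log_atTop)
    filter_upwards [eventually_gt_atTop (0:ℝ)] with κ hκ
    have hs := s_pos hκ
    have h1 : (0:ℝ) ≤ κ / (Real.exp κ - 1) := by positivity
    have h2 : Real.log ((Real.exp κ - 1) / (κ * Real.exp κ)) ≤ -Real.log κ := by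
      have harg : (Real.exp κ - 1) / (κ * Real.exp κ) ≤ κ⁻¹ := by
        rw [div_le_iff₀ (by positivity)]
        have : Real.exp κ - 1 ≤ Real.exp κ := by linarith
        calc Real.exp κ - 1 ≤ Real.exp κ := this
          _ = κ⁻¹ * (κ * Real.exp κ) := by field_simp
      calc Real.log ((Real.exp κ - 1) / (κ * Real.exp κ)) ≤ Real.log κ⁻¹ :=
            Real.log_le_log (by positivity) harg
        _ = -Real.log κ := Real.log_inv κ
    linarith
end
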